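/- arXiv:1208.2444 — 3 statements merged into one kernel-verified Lean document; each statement's English description precedes it below -/
import Mathlib

section
/- Let A be a C*-algebra, let a ∈ A be positive, and let ε > 0. If b ∈ A is positive with ‖a − b‖ < ε, then (a − ε)₊ ≼ b (Cuntz subequivalence). In particular, for positive a and δ, ε > 0, ((a − δ)₊ − ε)₊ = (a − (δ + ε))₊. -/
open Filter

/-- Cuntz subequivalence: `a ≼ b` iff there is a sequence `xₙ` with `‖a - xₙ b xₙ*‖ → 0`. -/
def CuntzLE {A : Type*} [NonUnitalRing A] [Star A] [Norm A] (a b : A) : Prop :=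
  ∃ x : ℕ → A, Tendsto (fun n => ‖a - x n * b * star (x n)‖) atTop (nhds 0)

section Aux

variable {A : Type*} [CStarAlgebra A] [PartialOrder A] [StarOrderedRing A]

lemma cuntzLE_of_le {c b : A} (hc : 0 ≤ c) (hb : 0 ≤ b) (hcb : c ≤ b) :
    CuntzLE c b := by
  have hbsp : ∀ x ∈ spectrum ℝ b, (0:ℝ) ≤ x := spectrum_nonneg_of_nonneg hb
  have hcsp : ∀ x ∈ spectrum ℝ c, (0:ℝ) ≤ x := spectrum_nonneg_of_nonneg hc
  have hbsa : IsSelfAdjoint b := .of_nonneg hb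
  have hcsa : IsSelfAdjoint c := .of_nonneg hc
  set s : ℕ → ℝ := fun n => 1 / (n + 1) with hs_def
  have hs : ∀ n, 0 < s n := fun n => by positivity
  set r : A := cfc Real.sqrt c with hr_def
  have hrsa : IsSelfAdjoint r := cfc_predicate _ _
  have hrr : r * r = c := by
    rw [hr_def, ← cfc_mul Real.sqrt Real.sqrt c (by fun_prop) (by fun_prop)]
    rw [cfc_congr (g := fun x : ℝ => x) fun x hx => Real.mul_self_sqrt (hcsp x hx), cfc_id' ℝ c]
  refine ⟨fun n => r * cfc (fun t : ℝ => (Real.sqrt (t + s n))⁻¹) b, ?_⟩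
  have key : ∀ n, ‖c - (r * cfc (fun t : ℝ => (Real.sqrt (t + s n))⁻¹) b) * b *
      star (r * cfc (fun t : ℝ => (Real.sqrt (t + s n))⁻¹) b)‖ ≤ s n := by
    intro n
    set u : ℝ → ℝ := fun t => (Real.sqrt (t + s n))⁻¹ with hu_def
    have hu : ContinuousOn u (spectrum ℝ b) := by
      apply ContinuousOn.inv₀
      · fun_prop
      · intro x hx
        have := hbsp x hx
        positivity
    set f : ℝ → ℝ := fun t => u t * t * u t with hf_def
    have hf : ContinuousOn f (spectrum ℝ b) := by
      apply (hu.mul continuousOn_id).mul hu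
    set g : ℝ → ℝ := fun t => 1 - f t with hg_def
    have hg : ContinuousOn g (spectrum ℝ b) := continuousOn_const.sub hf
    have hgval : ∀ x ∈ spectrum ℝ b, g x = s n / (x + s n) := by
      intro x hx
      have hx0 := hbsp x hx
      have hxs : 0 < x + s n := by have := hs n; linarith
      have husq : u x * u x = (x + s n)⁻¹ := by
        rw [hu_def]
        simp only
        rw [← mul_inv, Real.mul_self_sqrt hxs.le]
      have : f x = x / (x + s n) := by
        rw [hf_def]
        simp only
        rw [mul_comm (u x) x, mul_assoc, husq, div_eq_mul_inv]
      rw [hg_def]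
      simp only [this]
      field_simp
      ring
    have hgnn : ∀ x ∈ spectrum ℝ b, 0 ≤ g x := by
      intro x hx
      rw [hgval x hx]
      have hx0 := hbsp x hx
      have := hs n
      positivity
    have husa : IsSelfAdjoint (cfc u b) := cfc_predicate _ _
    have hxstar : star (r * cfc u b) = cfc u b * r := by
      rw [star_mul, husa.star_eq, hrsa.star_eq]
    have hmid : cfc u b * b * cfc u b = cfc f b := by
      rw [hf_def]
      rw [cfc_mul (fun t => u t * t) u b (hu.mul continuousOn_id) hu,
        cfc_mul u (fun t => t) b hu continuousOn_id, cfc_id' ℝ b]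
    have hsa : IsSelfAdjoint b := hbsa
    have hrewrite : c - (r * cfc u b) * b * star (r * cfc u b) = r * cfc g b * r := by
      rw [hxstar]
      have h1 : (r * cfc u b) * b * (cfc u b * r) = r * (cfc u b * b * cfc u b) * r := by
        noncomm_ring
      rw [h1, hmid, hg_def]
      rw [cfc_sub (fun _ => (1:ℝ)) f b continuousOn_const hf, cfc_const_one ℝ b]
      rw [mul_sub, sub_mul, mul_one, hrr]
    rw [hrewrite]
    set d : A := cfc (fun t => Real.sqrt (g t)) b with hd_def
    have hdcont : ContinuousOn (fun t => Real.sqrt (g t)) (spectrum ℝ b) :=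
      Real.continuous_sqrt.comp_continuousOn hg
    have hdsa : IsSelfAdjoint d := cfc_predicate _ _
    have hdd : d * d = cfc g b := by
      rw [hd_def, ← cfc_mul _ _ b hdcont hdcont]
      exact cfc_congr fun x hx => Real.mul_self_sqrt (hgnn x hx)
    have hstep : r * cfc g b * r = star (d * r) * (d * r) := by
      rw [star_mul, hdsa.star_eq, hrsa.star_eq, ← hdd]
      noncomm_ring
    have hnorm1 : ‖r * cfc g b * r‖ = ‖d * c * d‖ := by
      rw [hstep, CStarRing.norm_star_mul_self, ← CStarRing.norm_self_mul_star]
      congr 1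
      rw [star_mul, hdsa.star_eq, hrsa.star_eq, ← hrr]
      noncomm_ring
    rw [hnorm1]
    have hconj_le : d * c * d ≤ d * b * d := by
      have := star_left_conjugate_le_conjugate hcb d
      rwa [hdsa.star_eq] at this
    have hconj_nn : 0 ≤ d * c * d := by
      have := star_left_conjugate_nonneg hc d
      rwa [hdsa.star_eq] at this
    calc ‖d * c * d‖ ≤ ‖d * b * d‖ := CStarAlgebra.norm_le_norm_of_nonneg_of_le hconj_nn hconj_le
      _ ≤ s n := by
          have hdbd : d * b * d = cfc (fun t => Real.sqrt (g t) * t * Real.sqrt (g t)) b := by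
            rw [hd_def, cfc_mul (fun t => Real.sqrt (g t) * t) _ b
              (hdcont.mul continuousOn_id) hdcont,
              cfc_mul _ (fun t => t) b hdcont continuousOn_id, cfc_id' ℝ b]
          rw [hdbd]
          apply norm_cfc_le (hs n).le
          intro x hx
          have hx0 := hbsp x hx
          have hxs : 0 < x + s n := by have := hs n; linarith
          have : Real.sqrt (g x) * x * Real.sqrt (g x) = g x * x := by
            rw [mul_comm _ x, mul_assoc, Real.mul_self_sqrt (hgnn x hx), mul_comm]
          rw [this, hgval x hx, Real.norm_eq_abs, abs_of_nonneg (by positivity)]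
          rw [div_mul_eq_mul_div, mul_div_assoc]
          exact mul_le_of_le_one_right (hs n).le (by rw [div_le_one hxs]; have := hs n; linarith)
  apply squeeze_zero (fun n => norm_nonneg _) key
  exact tendsto_one_div_add_atTop_nhds_zero_nat

end Aux

/-- If `a, b` are positive with `‖a − b‖ < ε`, then `(a − ε)₊ ≼ b`; moreover for positive `a`
and `δ, ε > 0` one has `((a − δ)₊ − ε)₊ = (a − (δ + ε))₊`.  Here `(a - ε)₊` is the
functional-calculus positive part `cfc (fun t => max (t - ε) 0) a`. -/
theorem posPart_cuntzLE {A : Type*} [CStarAlgebra A] [PartialOrder A] [StarOrderedRing A]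
    (a : A) (ha : 0 ≤ a) (ε : ℝ) (hε : 0 < ε) :
    (∀ b : A, 0 ≤ b → ‖a - b‖ < ε → CuntzLE (cfc (fun t : ℝ => max (t - ε) 0) a) b) ∧
      (∀ δ ε' : ℝ, 0 < δ → 0 < ε' →
        cfc (fun t : ℝ => max (t - ε') 0) (cfc (fun t : ℝ => max (t - δ) 0) a)
          = cfc (fun t : ℝ => max (t - (δ + ε')) 0) a) := by
  constructor
  · intro b hb hab
    have hasa : IsSelfAdjoint a := .of_nonneg ha
    have hbsa : IsSelfAdjoint b := .of_nonneg hb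
    set rr : ℝ := ‖a - b‖ with hrr_def
    have hrrε : rr < ε := hab
    have hεr : 0 < ε - rr := by linarith
    set h : ℝ → ℝ := fun t => Real.sqrt (max (t - ε) 0 / max (t - rr) (ε - rr)) with hh_def
    have hden_pos : ∀ t : ℝ, 0 < max (t - rr) (ε - rr) := fun t =>
      lt_of_lt_of_le hεr (le_max_right _ _)
    have hhcont : Continuous h := by
      apply Real.continuous_sqrt.comp
      exact Continuous.div (by fun_prop) (by fun_prop) fun t => (hden_pos t).ne'
    have hH : IsSelfAdjoint (cfc h a) := cfc_predicate _ _
    have hle : a - algebraMap ℝ A rr ≤ b := by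
      have h1 : a - b ≤ algebraMap ℝ A rr :=
        IsSelfAdjoint.le_algebraMap_norm_self (hasa.sub hbsa)
      have := sub_le_sub_right h1 (algebraMap ℝ A rr - b)
      calc a - algebraMap ℝ A rr = a - b - (algebraMap ℝ A rr - b) := by abel
        _ ≤ algebraMap ℝ A rr - (algebraMap ℝ A rr - b) := sub_le_sub_right h1 _
        _ = b := by abel
    have hsub : cfc (fun t : ℝ => t - rr) a = a - algebraMap ℝ A rr := by
      rw [cfc_sub (fun t : ℝ => t) (fun _ => rr) a (by fun_prop) (by fun_prop),
        cfc_id' ℝ a, cfc_const rr a]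
    have hptwise : ∀ t : ℝ, h t * (t - rr) * h t = max (t - ε) 0 := by
      intro t
      by_cases ht : t ≤ ε
      · have hnum : max (t - ε) 0 = 0 := max_eq_right (by linarith)
        rw [hh_def]
        simp only [hnum, zero_div, Real.sqrt_zero, zero_mul, mul_zero]
      · push_neg at ht
        have hden : max (t - rr) (ε - rr) = t - rr := max_eq_left (by linarith)
        have hnum : max (t - ε) 0 = t - ε := max_eq_left (by linarith)
        have htr : 0 < t - rr := by linarith
        have hhh : h t * h t = (t - ε) / (t - rr) := by
          rw [hh_def]
          simp only
          rw [hnum, hden, Real.mul_self_sqrt (div_nonneg (by linarith) htr.le)]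
        rw [hnum, mul_right_comm, hhh, div_mul_cancel₀ _ htr.ne']
    have hkey : cfc (fun t : ℝ => max (t - ε) 0) a
        = cfc h a * (a - algebraMap ℝ A rr) * cfc h a := by
      rw [← hsub, ← cfc_mul h (fun t : ℝ => t - rr) a hhcont.continuousOn (by fun_prop),
        ← cfc_mul _ h a (by fun_prop) hhcont.continuousOn]
      exact cfc_congr fun t _ => (hptwise t).symm
    have hle2 : cfc (fun t : ℝ => max (t - ε) 0) a ≤ cfc h a * b * cfc h a := by
      rw [hkey]
      have := star_left_conjugate_le_conjugate hle (cfc h a)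
      rwa [hH.star_eq] at this
    have hb' : (0 : A) ≤ cfc h a * b * cfc h a := by
      have := star_left_conjugate_nonneg hb (cfc h a)
      rwa [hH.star_eq] at this
    obtain ⟨x, hx⟩ := cuntzLE_of_le (cfc_nonneg fun t _ => le_max_right _ _) hb' hle2
    refine ⟨fun n => x n * cfc h a, ?_⟩
    have heq : ∀ n, (x n * cfc h a) * b * star (x n * cfc h a)
        = x n * (cfc h a * b * cfc h a) * star (x n) := by
      intro n
      rw [star_mul, hH.star_eq]
      noncomm_ring
    simpa only [heq] using hx
  · intro δ ε' hδ hε'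
    rw [← cfc_comp (fun t : ℝ => max (t - ε') 0) (fun t : ℝ => max (t - δ) 0) a
      (.of_nonneg ha) (by fun_prop) (by fun_prop)]
    apply cfc_congr
    intro t _
    simp only [Function.comp_apply]
    rcases le_total t δ with h | h
    · have h1 : max (t - δ) 0 = 0 := max_eq_right (by linarith)
      rw [h1]
      rw [max_eq_right (by linarith : (0:ℝ) - ε' ≤ 0),
        max_eq_right (by linarith : t - (δ + ε') ≤ 0)]
    · have h1 : max (t - δ) 0 = t - δ := max_eq_left (by linarith)
      rw [h1]
      congr 1
      ring
end

section
/- Let A be a unital C*-algebra and suppose a ∈ A is a positive element for which there exist ℓ ∈ ℕ and c₁, …, c_ℓ ∈ A with Σ_{k=1}^ℓ c_k* a c_k = 1. Then for every tracial state τ on A, d_τ(a) ≥ 1/ℓ. -/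
open Filter
open scoped ComplexOrder
open scoped NNReal

section Aux
variable {A : Type*} [CStarAlgebra A] [PartialOrder A] [StarOrderedRing A]

lemma myCfc_rpow_eq (a : A) (r : ℝ) (ha : 0 ≤ a) :
    cfc (fun t : ℝ => t ^ r) a = a ^ r := by
  rw [CFC.rpow_def, cfc_nnreal_eq_real _ a ha]
  apply cfc_congr
  intro t ht
  have ht' : 0 ≤ t := spectrum_nonneg_of_nonneg ha ht
  simp [NNReal.coe_rpow, Real.coe_toNNReal t ht']

lemma mySqrt_monoU [Nontrivial A] {a b : A} (ha : 0 ≤ a) (hb : 0 ≤ b) (hab : a ≤ b) (hu : IsUnit b) :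
    a ^ ((1:ℝ)/2) ≤ b ^ ((1:ℝ)/2) := by
  have h0 : (0:ℝ≥0) ∉ spectrum ℝ≥0 b := spectrum.zero_notMem ℝ≥0 hu
  have hsa : ∀ (x : A) (r : ℝ), 0 ≤ x → star (x ^ r) = x ^ r := fun x r hx =>
    (IsSelfAdjoint.of_nonneg (CFC.rpow_nonneg)).star_eq
  set s := a ^ ((1:ℝ)/2) * b ^ (-(1/2):ℝ) with hs_def
  have hss : star s * s = b ^ (-(1/2):ℝ) * a * b ^ (-(1/2):ℝ) := by
    rw [hs_def, star_mul, hsa a _ ha, hsa b _ hb]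
    have : a ^ ((1:ℝ)/2) * a ^ ((1:ℝ)/2) = a := by
      rw [← CFC.sqrt_eq_rpow, CFC.sqrt_mul_sqrt_self a ha]
    calc b ^ (-(1/2):ℝ) * a ^ ((1:ℝ)/2) * (a ^ ((1:ℝ)/2) * b ^ (-(1/2):ℝ))
        = b ^ (-(1/2):ℝ) * (a ^ ((1:ℝ)/2) * a ^ ((1:ℝ)/2)) * b ^ (-(1/2):ℝ) := by
          noncomm_ring
      _ = b ^ (-(1/2):ℝ) * a * b ^ (-(1/2):ℝ) := by rw [this]
  have e1 : b ^ (-(1/2):ℝ) * b = b ^ ((1/2):ℝ) := by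
    have h := (CFC.rpow_add (a := b) (x := (-(1/2):ℝ)) (y := 1) hu)
    rw [CFC.rpow_one b hb] at h
    rw [← h]
    norm_num
  have e2 : b ^ ((1/2):ℝ) * b ^ (-(1/2):ℝ) = 1 := by
    rw [← CFC.rpow_add hu]
    norm_num
    exact CFC.rpow_zero b hb
  have hbbb : b ^ (-(1/2):ℝ) * b * b ^ (-(1/2):ℝ) = 1 := by
    rw [e1, e2]
  have hle1 : star s * s ≤ 1 := by
    rw [hss, ← hbbb]
    have := (IsSelfAdjoint.of_nonneg (CFC.rpow_nonneg (a := b) (y := (-(1/2):ℝ)))).conjugate_le_conjugate hab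
    exact this
  have hnorms : ‖s‖ ≤ 1 := by
    have h1 : ‖star s * s‖ ≤ 1 := by
      rw [CStarAlgebra.norm_le_one_iff_of_nonneg _ (star_mul_self_nonneg s)]
      exact hle1
    have h2 : ‖star s * s‖ = ‖s‖ * ‖s‖ := CStarRing.norm_star_mul_self
    nlinarith [norm_nonneg s]
  set u := b ^ (-(1/4):ℝ) with hu_def
  have hu_sa : star u = u := hsa b _ hb
  set w := u * a ^ ((1:ℝ)/2) * u with hw_def
  have huu : u * u = b ^ (-(1/2):ℝ) := by
    rw [hu_def, ← CFC.rpow_add hu]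
    norm_num
  have hwσ : ∀ x ∈ spectrum ℝ w, x ≤ 1 := by
    intro x hx
    rcases eq_or_ne x 0 with h | h
    · simp [h]
    · have hx0 : x ∈ spectrum ℝ (u * (a ^ ((1:ℝ)/2) * u)) := by
        rwa [← mul_assoc]
      have hx1 : x ∈ spectrum ℝ (a ^ ((1:ℝ)/2) * u * u) := by
        have hmem : x ∈ spectrum ℝ (u * (a ^ ((1:ℝ)/2) * u)) \ {0} := ⟨hx0, h⟩
        rw [spectrum.nonzero_mul_comm] at hmem
        exact hmem.1
      rw [mul_assoc, huu] at hx1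
      have hn : ‖x‖ ≤ ‖s‖ := spectrum.norm_le_norm_of_mem hx1
      calc x ≤ ‖x‖ := Real.le_norm_self x
        _ ≤ ‖s‖ := hn
        _ ≤ 1 := hnorms
  have hwsa : IsSelfAdjoint w := by
    rw [hw_def]
    have := hsa a ((1:ℝ)/2) ha
    unfold IsSelfAdjoint
    simp only [star_mul, hu_sa, this, mul_assoc]
  have hw1 : w ≤ 1 := by
    calc w = cfc (id : ℝ → ℝ) w := (cfc_id ℝ w hwsa).symm
      _ ≤ cfc (fun _ : ℝ => (1:ℝ)) w := cfc_mono (fun x hx => hwσ x hx)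
      _ = 1 := cfc_const_one ℝ w
  set v := b ^ ((1/4):ℝ) with hv_def
  have hv_sa : star v = v := hsa b _ hb
  have hvu : v * u = 1 := by
    rw [hv_def, hu_def, ← CFC.rpow_add hu]
    norm_num
    exact CFC.rpow_zero b hb
  have huv : u * v = 1 := by
    rw [hv_def, hu_def, ← CFC.rpow_add hu]
    norm_num
    exact CFC.rpow_zero b hb
  have hvv : v * v = b ^ ((1/2):ℝ) := by
    rw [hv_def, ← CFC.rpow_add hu]
    norm_num
  have hconj := star_left_conjugate_le_conjugate hw1 v
  rw [hv_sa] at hconj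
  have hlhs : v * w * v = a ^ ((1:ℝ)/2) := by
    rw [hw_def]
    calc v * (u * a ^ ((1:ℝ)/2) * u) * v
        = (v * u) * a ^ ((1:ℝ)/2) * (u * v) := by noncomm_ring
      _ = a ^ ((1:ℝ)/2) := by rw [hvu, huv, one_mul, mul_one]
  have hrhs : v * 1 * v = b ^ ((1:ℝ)/2) := by
    rw [mul_one, hvv]
  rw [hlhs, hrhs] at hconj
  exact hconj

lemma myCont_rpow (r : ℝ) (hr : 0 < r) : Continuous (fun t : ℝ => t ^ r) := by
  rw [continuous_iff_continuousAt]
  intro x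
  exact Real.continuousAt_rpow_const x r (Or.inr hr.le)

lemma mySqrt_mono [Nontrivial A] {a b : A} (ha : 0 ≤ a) (hab : a ≤ b) :
    a ^ ((1:ℝ)/2) ≤ b ^ ((1:ℝ)/2) := by
  have hb : 0 ≤ b := ha.trans hab
  have hbsa : IsSelfAdjoint b := .of_nonneg hb
  have hcont : Continuous (fun t : ℝ => t ^ ((1:ℝ)/2)) := myCont_rpow _ (by norm_num)
  have key : ∀ ε : ℝ, 0 < ε →
      a ^ ((1:ℝ)/2) ≤ b ^ ((1:ℝ)/2) + algebraMap ℝ A (Real.sqrt ε) := by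
    intro ε hε
    set bε := b + algebraMap ℝ A ε with hbε
    have halg_nonneg : (0:A) ≤ algebraMap ℝ A ε := by
      rw [Algebra.algebraMap_eq_smul_one]
      exact smul_nonneg hε.le zero_le_one
    have hbε_nonneg : 0 ≤ bε := add_nonneg hb halg_nonneg
    have hbε_unit : IsUnit bε := by
      refine CStarAlgebra.isUnit_of_le _ ?_ (IsUnit.isStrictlyPositive
        ((algebraMap ℝ A).isUnit_map (isUnit_iff_ne_zero.mpr hε.ne')) halg_nonneg)
      · rw [hbε]; exact le_add_of_nonneg_left hb
    have h1 : a ^ ((1:ℝ)/2) ≤ bε ^ ((1:ℝ)/2) :=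
      mySqrt_monoU ha hbε_nonneg (hab.trans (le_add_of_nonneg_right halg_nonneg)) hbε_unit
    have hbε_eq : bε = cfc (fun t : ℝ => t + ε) b := by
      rw [cfc_add (a := b) (fun t : ℝ => t) (fun _ => ε), cfc_id' ℝ b, cfc_const ε b]
    have hcomp : bε ^ ((1:ℝ)/2) = cfc (fun t : ℝ => (t + ε) ^ ((1:ℝ)/2)) b := by
      rw [← myCfc_rpow_eq bε _ hbε_nonneg]
      conv_lhs => rw [hbε_eq]
      exact (cfc_comp' (fun t : ℝ => t ^ ((1:ℝ)/2)) (fun t : ℝ => t + ε) b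
        hcont.continuousOn).symm
    have hmono : cfc (fun t : ℝ => (t + ε) ^ ((1:ℝ)/2)) b
        ≤ cfc (fun t : ℝ => t ^ ((1:ℝ)/2) + Real.sqrt ε) b := by
      refine cfc_mono (fun t ht => ?_) ((hcont.comp (by continuity)).continuousOn)
        ((hcont.add continuous_const).continuousOn)
      have ht' : 0 ≤ t := spectrum_nonneg_of_nonneg hb ht
      rw [← Real.sqrt_eq_rpow, ← Real.sqrt_eq_rpow]
      have h := Real.sqrt_le_sqrt (show t + ε ≤ (Real.sqrt t + Real.sqrt ε)^2 by
        nlinarith [Real.sq_sqrt ht', Real.sq_sqrt hε.le, Real.sqrt_nonneg t,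
          Real.sqrt_nonneg ε])
      rwa [Real.sqrt_sq (by positivity)] at h
    have hsplit : cfc (fun t : ℝ => t ^ ((1:ℝ)/2) + Real.sqrt ε) b
        = b ^ ((1:ℝ)/2) + algebraMap ℝ A (Real.sqrt ε) := by
      rw [cfc_add (a := b) _ _ hcont.continuousOn, cfc_const _ b, myCfc_rpow_eq b _ hb]
    calc a ^ ((1:ℝ)/2) ≤ bε ^ ((1:ℝ)/2) := h1
      _ = cfc (fun t : ℝ => (t + ε) ^ ((1:ℝ)/2)) b := hcomp
      _ ≤ cfc (fun t : ℝ => t ^ ((1:ℝ)/2) + Real.sqrt ε) b := hmono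
      _ = b ^ ((1:ℝ)/2) + algebraMap ℝ A (Real.sqrt ε) := hsplit
  have hseq : ∀ n : ℕ,
      b ^ ((1:ℝ)/2) + algebraMap ℝ A (Real.sqrt (1/(n+1))) - a ^ ((1:ℝ)/2) ∈ {x : A | 0 ≤ x} :=
    fun n => sub_nonneg.mpr (key _ (by positivity))
  have h1 : Tendsto (fun n : ℕ => Real.sqrt (1/(n+1))) atTop (nhds 0) := by
    rw [show (0:ℝ) = Real.sqrt 0 by simp]
    exact (Real.continuous_sqrt.tendsto 0).comp tendsto_one_div_add_atTop_nhds_zero_nat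
  have h2 : Tendsto (fun n : ℕ => algebraMap ℝ A (Real.sqrt (1/(n+1)))) atTop (nhds 0) := by
    simp only [Algebra.algebraMap_eq_smul_one]
    have := h1.smul (tendsto_const_nhds : Tendsto (fun _ : ℕ => (1:A)) atTop (nhds 1))
    simpa using this
  have htend : Tendsto
      (fun n : ℕ => b ^ ((1:ℝ)/2) + algebraMap ℝ A (Real.sqrt (1/(n+1))) - a ^ ((1:ℝ)/2))
      atTop (nhds (b ^ ((1:ℝ)/2) - a ^ ((1:ℝ)/2))) := by
    have := ((tendsto_const_nhds :
        Tendsto (fun _ : ℕ => b ^ ((1:ℝ)/2)) atTop (nhds (b ^ ((1:ℝ)/2)))).add h2).sub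
      (tendsto_const_nhds :
        Tendsto (fun _ : ℕ => a ^ ((1:ℝ)/2)) atTop (nhds (a ^ ((1:ℝ)/2))))
    simpa using this
  have hmem := CStarAlgebra.isClosed_nonneg.mem_of_tendsto htend (Eventually.of_forall hseq)
  exact sub_nonneg.mp hmem

end Aux

noncomputable def myExp (k : ℕ) : ℝ := ((1:ℝ)/2)^k

lemma myExp_pos (k : ℕ) : 0 < myExp k := by
  unfold myExp; positivity

lemma myExp_le_one (k : ℕ) : myExp k ≤ 1 := by
  unfold myExp
  exact pow_le_one₀ (by norm_num) (by norm_num)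

lemma myExp_succ (k : ℕ) : myExp (k+1) = myExp k * (1/2 : ℝ) := by
  unfold myExp; rw [pow_succ]

section Aux2
variable {A : Type*} [CStarAlgebra A] [PartialOrder A] [StarOrderedRing A]

lemma myRoot_mono [Nontrivial A] (k : ℕ) {a b : A} (ha : 0 ≤ a) (hab : a ≤ b) :
    a ^ (myExp k) ≤ b ^ (myExp k) := by
  induction k with
  | zero =>
    have h0 : myExp 0 = (1:ℝ) := by unfold myExp; simp
    rw [h0, CFC.rpow_one a ha, CFC.rpow_one b (ha.trans hab)]
    exact hab
  | succ k ih =>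
    have e : ∀ x : A, 0 ≤ x → x ^ (myExp (k+1)) = (x ^ (myExp k)) ^ ((1:ℝ)/2) := by
      intro x hx
      rw [CFC.rpow_rpow_of_exponent_nonneg x _ _ (myExp_pos k).le (by norm_num) hx,
        myExp_succ]
    rw [e a ha, e b (ha.trans hab)]
    exact mySqrt_mono CFC.rpow_nonneg ih

section TraceAux

set_option linter.unusedSectionVars false

lemma myTau_real_smul (τ : A →ₗ[ℂ] ℂ) (r : ℝ) (x : A) : τ (r • x) = (r : ℂ) * τ x := by
  rw [← algebraMap_smul ℂ r x, map_smul, Complex.coe_algebraMap, smul_eq_mul]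

lemma myTau_mono (τ : A →ₗ[ℂ] ℂ) (hτpos : ∀ x : A, 0 ≤ x → 0 ≤ τ x)
    {x y : A} (h : x ≤ y) : (τ x).re ≤ (τ y).re := by
  have h1 := hτpos _ (sub_nonneg.mpr h)
  rw [map_sub] at h1
  have h2 := (Complex.le_def.mp h1).1
  simp only [Complex.zero_re, Complex.sub_re] at h2
  linarith

lemma myTau_algebraMap (τ : A →ₗ[ℂ] ℂ) (hτ1 : τ 1 = 1) (r : ℝ) :
    τ (algebraMap ℝ A r) = (r : ℂ) := by
  rw [Algebra.algebraMap_eq_smul_one, myTau_real_smul, hτ1, mul_one]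

lemma myTau_norm_bound (τ : A →ₗ[ℂ] ℂ) (hτpos : ∀ x : A, 0 ≤ x → 0 ≤ τ x)
    (hτ1 : τ 1 = 1) {x : A} (hx : IsSelfAdjoint x) : |(τ x).re| ≤ ‖x‖ := by
  rw [abs_le]
  constructor
  · have h1 := myTau_mono τ hτpos hx.neg_algebraMap_norm_le_self
    rw [map_neg, myTau_algebraMap τ hτ1] at h1
    simpa using h1
  · have h1 := myTau_mono τ hτpos hx.le_algebraMap_norm_self
    rw [myTau_algebraMap τ hτ1] at h1
    simpa using h1

lemma myPow_swap_aux (x : A) (m : ℕ) :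
    (star x * x) ^ m * star x = star x * (x * star x) ^ m := by
  induction m with
  | zero => simp
  | succ m ih =>
    calc (star x * x) ^ (m+1) * star x
        = ((star x * x) ^ m * star x) * (x * star x) := by
          rw [pow_succ]; noncomm_ring
      _ = star x * ((x * star x) ^ m * (x * star x)) := by rw [ih, mul_assoc]
      _ = star x * (x * star x) ^ (m+1) := by rw [← pow_succ]

lemma myTau_pow_swap (τ : A →ₗ[ℂ] ℂ) (hτtr : ∀ x y : A, τ (x * y) = τ (y * x))
    (x : A) (m : ℕ) : τ ((star x * x) ^ m) = τ ((x * star x) ^ m) := by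
  cases m with
  | zero => simp
  | succ m =>
    have h : (star x * x) ^ (m+1) = star x * ((x * star x) ^ m * x) := by
      calc (star x * x) ^ (m+1) = ((star x * x) ^ m * star x) * x := by
            rw [pow_succ, mul_assoc]
        _ = star x * ((x * star x) ^ m * x) := by rw [myPow_swap_aux, mul_assoc]
    rw [h, hτtr]
    congr 1
    rw [mul_assoc, ← pow_succ]

lemma myTau_aeval_swap (τ : A →ₗ[ℂ] ℂ) (hτtr : ∀ x y : A, τ (x * y) = τ (y * x))
    (x : A) (p : Polynomial ℝ) :
    τ (Polynomial.aeval (star x * x) p) = τ (Polynomial.aeval (x * star x) p) := by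
  rw [Polynomial.aeval_eq_sum_range (star x * x), Polynomial.aeval_eq_sum_range (x * star x)]
  rw [map_sum, map_sum]
  refine Finset.sum_congr rfl fun i _ => ?_
  rw [myTau_real_smul, myTau_real_smul, myTau_pow_swap τ hτtr]

lemma myTau_cfc_swap [Nontrivial A] (τ : A →ₗ[ℂ] ℂ)
    (hτpos : ∀ x : A, 0 ≤ x → 0 ≤ τ x) (hτ1 : τ 1 = 1)
    (hτtr : ∀ x y : A, τ (x * y) = τ (y * x))
    (x : A) (f : ℝ → ℝ) (hf : Continuous f) :
    (τ (cfc f (star x * x))).re = (τ (cfc f (x * star x))).re := by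
  set b₁ := star x * x with hb₁_def
  set b₂ := x * star x with hb₂_def
  have hb₁ : 0 ≤ b₁ := star_mul_self_nonneg x
  have hb₂ : 0 ≤ b₂ := mul_star_self_nonneg x
  set R := max ‖b₁‖ ‖b₂‖ with hR_def
  have hσ : ∀ b : A, ‖b‖ ≤ R → ∀ t ∈ spectrum ℝ b, t ∈ Set.Icc (-R) R := by
    intro b hbR t ht
    have h1 : ‖t‖ ≤ ‖b‖ := spectrum.norm_le_norm_of_mem ht
    rw [Real.norm_eq_abs] at h1
    have := abs_le.mp (h1.trans hbR)
    exact ⟨this.1, this.2⟩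
  have hσ₁ := hσ b₁ (le_max_left _ _)
  have hσ₂ := hσ b₂ (le_max_right _ _)
  set D := (τ (cfc f b₁)).re - (τ (cfc f b₂)).re with hD_def
  suffices h : ∀ ε : ℝ, 0 < ε → |D| ≤ ε by
    have hD0 : |D| ≤ 0 := by
      by_contra hc
      push_neg at hc
      linarith [h (|D|/2) (by linarith)]
    have hD1 : D = 0 := abs_nonpos_iff.mp hD0
    rw [hD_def] at hD1
    linarith
  intro ε hε
  obtain ⟨p, hp⟩ := exists_polynomial_near_of_continuousOn (-R) R f hf.continuousOn (ε/2)
    (by linarith)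
  have hbound : ∀ b : A, 0 ≤ b → (∀ t ∈ spectrum ℝ b, t ∈ Set.Icc (-R) R) →
      |(τ (cfc f b)).re - (τ (Polynomial.aeval b p)).re| ≤ ε/2 := by
    intro b hb hσb
    have hsa : IsSelfAdjoint b := .of_nonneg hb
    have hEq : cfc (fun t : ℝ => f t - p.eval t) b = cfc f b - Polynomial.aeval b p := by
      rw [cfc_sub f (fun t => p.eval t) b hf.continuousOn
        (Polynomial.continuous p).continuousOn, cfc_polynomial p b hsa]
    have hnorm : ‖cfc (fun t : ℝ => f t - p.eval t) b‖ ≤ ε/2 := by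
      refine norm_cfc_le (by linarith) fun t ht => ?_
      have h2 := hp t (hσb t ht)
      rw [Real.norm_eq_abs]
      rw [abs_sub_comm] at h2
      exact h2.le
    have hsa' : IsSelfAdjoint (cfc (fun t : ℝ => f t - p.eval t) b) := cfc_predicate _ b
    have hτd := myTau_norm_bound τ hτpos hτ1 hsa'
    calc |(τ (cfc f b)).re - (τ (Polynomial.aeval b p)).re|
        = |(τ (cfc f b - Polynomial.aeval b p)).re| := by rw [map_sub, Complex.sub_re]
      _ = |(τ (cfc (fun t : ℝ => f t - p.eval t) b)).re| := by rw [hEq]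
      _ ≤ ‖cfc (fun t : ℝ => f t - p.eval t) b‖ := hτd
      _ ≤ ε/2 := hnorm
  have hmid : (τ (Polynomial.aeval b₁ p)).re = (τ (Polynomial.aeval b₂ p)).re := by
    rw [myTau_aeval_swap τ hτtr]
  have h1 := hbound b₁ hb₁ hσ₁
  have h2 := hbound b₂ hb₂ hσ₂
  rw [hD_def]
  rw [abs_sub_comm] at h2
  calc |(τ (cfc f b₁)).re - (τ (cfc f b₂)).re|
      ≤ |(τ (cfc f b₁)).re - (τ (Polynomial.aeval b₁ p)).re|
        + |(τ (Polynomial.aeval b₂ p)).re - (τ (cfc f b₂)).re| := by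
        rw [hmid]
        exact abs_sub_le _ _ _
    _ ≤ ε/2 + ε/2 := add_le_add h1 h2
    _ = ε := by ring

end TraceAux

end Aux2


set_option maxHeartbeats 1000000 in
/-- If `a` is a positive element of a unital C*-algebra with `Σ_{k} cₖ* a cₖ = 1` for some
`c₁, …, c_ℓ`, then `d_τ(a) ≥ 1/ℓ` for every tracial state `τ`, where
`d_τ(a) = lim_n τ(a^{1/n})` (the limit value `d` being quantified via `Tendsto`). -/
theorem dimension_function_ge_of_full {A : Type*} [CStarAlgebra A]
    [PartialOrder A] [StarOrderedRing A]
    (a : A) (ha : 0 ≤ a) (ℓ : ℕ) (c : Fin ℓ → A)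
    (hfull : ∑ k, star (c k) * a * c k = 1)
    (τ : A →ₗ[ℂ] ℂ) (hτpos : ∀ x : A, 0 ≤ x → 0 ≤ τ x) (hτ1 : τ 1 = 1)
    (hτtr : ∀ x y : A, τ (x * y) = τ (y * x)) (d : ℝ)
    (hd : Tendsto (fun n : ℕ => (τ (cfc (fun t : ℝ => t ^ ((1:ℝ) / n)) a)).re)
      atTop (nhds d)) :
    1 / (ℓ : ℝ) ≤ d := by
  have hnt : Nontrivial A := by
    refine ⟨1, 0, fun h => ?_⟩
    rw [h, map_zero] at hτ1
    exact one_ne_zero hτ1.symm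
  have hℓ : 0 < ℓ := by
    refine Nat.pos_of_ne_zero fun h => ?_
    subst h
    have h1 : (0:A) = 1 := by simpa using hfull
    rw [← h1, map_zero] at hτ1
    exact one_ne_zero hτ1.symm
  set s := CFC.sqrt a with hs_def
  have hs_nonneg : 0 ≤ s := CFC.sqrt_nonneg a
  have hs_sa : star s = s := (IsSelfAdjoint.of_nonneg hs_nonneg).star_eq
  have hss : s * s = a := CFC.sqrt_mul_sqrt_self a ha
  set y : Fin ℓ → A := fun k => s * c k with hy_def
  have hyy : ∀ k, star (y k) * y k = star (c k) * a * c k := by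
    intro k
    rw [hy_def]
    simp only
    rw [star_mul, hs_sa]
    calc star (c k) * s * (s * c k) = star (c k) * (s * s) * c k := by noncomm_ring
      _ = star (c k) * a * c k := by rw [hss]
  have hsum : ∑ k, star (y k) * y k = 1 := by
    simp_rw [hyy]
    exact hfull
  have hy_le_one : ∀ k, star (y k) * y k ≤ 1 := by
    intro k
    rw [← hsum]
    exact Finset.single_le_sum (f := fun k => star (y k) * y k)
      (fun i _ => star_mul_self_nonneg _) (Finset.mem_univ k)
  set M : ℝ := 1 + ∑ k, ‖c k‖^2 with hM_def
  have hsum_nonneg : 0 ≤ ∑ k, ‖c k‖^2 := Finset.sum_nonneg fun i _ => sq_nonneg _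
  have hM_pos : 0 < M := by rw [hM_def]; linarith
  have hyM : ∀ k, y k * star (y k) ≤ M • a := by
    intro k
    have h1 : c k * star (c k) ≤ algebraMap ℝ A (‖c k‖^2) :=
      CStarAlgebra.mul_star_le_algebraMap_norm_sq
    have h2 : s * (c k * star (c k)) * s ≤ s * algebraMap ℝ A (‖c k‖^2) * s :=
      (IsSelfAdjoint.of_nonneg hs_nonneg).conjugate_le_conjugate h1
    have h3 : y k * star (y k) = s * (c k * star (c k)) * s := by
      rw [hy_def]
      simp only
      rw [star_mul, hs_sa]
      noncomm_ring
    have h4 : s * algebraMap ℝ A (‖c k‖^2) * s = (‖c k‖^2) • a := by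
      rw [Algebra.algebraMap_eq_smul_one]
      calc s * ((‖c k‖^2) • (1:A)) * s = (‖c k‖^2) • (s * 1 * s) := by
            rw [mul_smul_comm, smul_mul_assoc]
        _ = (‖c k‖^2) • a := by rw [mul_one, hss]
    have h5 : (‖c k‖^2) • a ≤ M • a := by
      rw [← sub_nonneg, ← sub_smul]
      refine smul_nonneg ?_ ha
      have h6 : ‖c k‖^2 ≤ ∑ j, ‖c j‖^2 :=
        Finset.single_le_sum (f := fun j : Fin ℓ => ‖c j‖^2)
          (fun i _ => sq_nonneg _) (Finset.mem_univ k)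
      rw [hM_def]
      linarith
    rw [h3]
    exact le_trans (h4 ▸ h2) h5
  have key : ∀ k : ℕ, 1 ≤ (ℓ : ℝ) * M ^ (myExp (k+1))
      * (τ (cfc (fun t : ℝ => t ^ ((1:ℝ) / ((2^(k+1) : ℕ) : ℝ))) a)).re := by
    intro k
    set e : ℝ := myExp (k+1) with he_def
    have he_pos : 0 < e := myExp_pos (k+1)
    have he_le : e ≤ 1 := myExp_le_one (k+1)
    have hexp : ((1:ℝ) / ((2^(k+1) : ℕ) : ℝ)) = e := by
      rw [he_def]
      unfold myExp
      push_cast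
      rw [div_pow, one_pow]
    have hfun : (fun t : ℝ => t ^ ((1:ℝ) / ((2^(k+1) : ℕ) : ℝ)))
        = (fun t : ℝ => t ^ e) := by
      funext t
      rw [hexp]
    rw [hfun]
    have hcont_e : Continuous (fun t : ℝ => t ^ e) := myCont_rpow e he_pos
    have h1 : (1:ℝ) = ∑ k, (τ (star (y k) * y k)).re := by
      have ht : τ (∑ k, star (y k) * y k) = 1 := by rw [hsum, hτ1]
      calc (1:ℝ) = (τ (∑ k, star (y k) * y k)).re := by rw [ht]; simp
        _ = ∑ k, (τ (star (y k) * y k)).re := by rw [map_sum, Complex.re_sum]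
    have h2 : ∀ k, (τ (star (y k) * y k)).re
        ≤ (τ (cfc (fun t : ℝ => t ^ e) (star (y k) * y k))).re := by
      intro k
      refine myTau_mono τ hτpos ?_
      set z := star (y k) * y k with hz_def
      have hz : 0 ≤ z := star_mul_self_nonneg _
      have hz1 : ‖z‖ ≤ 1 := (CStarAlgebra.norm_le_one_iff_of_nonneg z hz).mpr (hy_le_one k)
      calc z = cfc (id : ℝ → ℝ) z := (cfc_id ℝ z (IsSelfAdjoint.of_nonneg hz)).symm
        _ ≤ cfc (fun t : ℝ => t ^ e) z := by
          refine cfc_mono (fun t ht => ?_) continuous_id.continuousOn hcont_e.continuousOn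
          have ht0 : 0 ≤ t := spectrum_nonneg_of_nonneg hz ht
          have ht1 : t ≤ 1 := le_trans (Real.le_norm_self t)
            (le_trans (spectrum.norm_le_norm_of_mem ht) hz1)
          rcases eq_or_lt_of_le ht0 with h | h
          · simp [← h, Real.zero_rpow he_pos.ne']
          · calc (id t : ℝ) = t ^ (1:ℝ) := (Real.rpow_one t).symm
              _ ≤ t ^ e := Real.rpow_le_rpow_of_exponent_ge h ht1 he_le
    have h3 : ∀ k, (τ (cfc (fun t : ℝ => t ^ e) (star (y k) * y k))).re
        = (τ (cfc (fun t : ℝ => t ^ e) (y k * star (y k)))).re := fun k =>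
      myTau_cfc_swap τ hτpos hτ1 hτtr (y k) _ hcont_e
    have hMa_nonneg : 0 ≤ M • a := smul_nonneg hM_pos.le ha
    have h4 : ∀ i : Fin ℓ, (τ (cfc (fun t : ℝ => t ^ e) (y i * star (y i)))).re
        ≤ (τ (cfc (fun t : ℝ => t ^ e) (M • a))).re := by
      intro i
      refine myTau_mono τ hτpos ?_
      have hyk : 0 ≤ y i * star (y i) := mul_star_self_nonneg _
      have hmono := myRoot_mono (k+1) hyk (hyM i)
      rw [myCfc_rpow_eq _ e hyk, myCfc_rpow_eq _ e hMa_nonneg]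
      rw [he_def]
      exact hmono
    have h5 : cfc (fun t : ℝ => t ^ e) (M • a) = M ^ e • cfc (fun t : ℝ => t ^ e) a := by
      have hMa : M • a = cfc (fun t : ℝ => M * t) a :=
        (cfc_const_mul_id M a (IsSelfAdjoint.of_nonneg ha)).symm
      rw [hMa, ← cfc_comp' (fun t : ℝ => t ^ e) (fun t : ℝ => M * t) a hcont_e.continuousOn]
      have hcg : ∀ t ∈ spectrum ℝ a, (M * t) ^ e = M ^ e • t ^ e := fun t ht => by
        rw [smul_eq_mul]
        exact Real.mul_rpow hM_pos.le (spectrum_nonneg_of_nonneg ha ht)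
      rw [cfc_congr hcg]
      exact cfc_smul (M ^ e) (fun t : ℝ => t ^ e) a hcont_e.continuousOn
    have h6 : (τ (cfc (fun t : ℝ => t ^ e) (M • a))).re
        = M ^ e * (τ (cfc (fun t : ℝ => t ^ e) a)).re := by
      rw [h5, myTau_real_smul]
      simp [Complex.mul_re]
    calc (1:ℝ) = ∑ k, (τ (star (y k) * y k)).re := h1
      _ ≤ ∑ k, (τ (cfc (fun t : ℝ => t ^ e) (star (y k) * y k))).re :=
        Finset.sum_le_sum fun k _ => h2 k
      _ = ∑ k, (τ (cfc (fun t : ℝ => t ^ e) (y k * star (y k)))).re :=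
        Finset.sum_congr rfl fun k _ => h3 k
      _ ≤ ∑ _k : Fin ℓ, (τ (cfc (fun t : ℝ => t ^ e) (M • a))).re :=
        Finset.sum_le_sum fun k _ => h4 k
      _ = (ℓ : ℝ) * (τ (cfc (fun t : ℝ => t ^ e) (M • a))).re := by
        rw [Finset.sum_const, Finset.card_univ, Fintype.card_fin, nsmul_eq_mul]
      _ = (ℓ : ℝ) * M ^ e * (τ (cfc (fun t : ℝ => t ^ e) a)).re := by
        rw [h6]; ring
  have htwo : Tendsto (fun k : ℕ => (2:ℕ)^(k+1)) atTop atTop := by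
    refine tendsto_atTop_mono (fun k => ?_) tendsto_id
    calc (id k : ℕ) ≤ 2 ^ k := (Nat.lt_two_pow_self (n := k)).le
      _ ≤ 2 ^ (k+1) := Nat.pow_le_pow_right (by norm_num) (Nat.le_succ k)
  have hsub : Tendsto
      (fun k : ℕ => (τ (cfc (fun t : ℝ => t ^ ((1:ℝ) / ((2^(k+1) : ℕ) : ℝ))) a)).re)
      atTop (nhds d) := by
    have h := hd.comp htwo
    simp only [Function.comp_def] at h
    exact h
  have hMe : Tendsto (fun k : ℕ => M ^ (myExp (k+1))) atTop (nhds 1) := by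
    have h1 : Tendsto (fun k : ℕ => myExp (k+1)) atTop (nhds 0) := by
      unfold myExp
      have := tendsto_pow_atTop_nhds_zero_of_lt_one (by norm_num : (0:ℝ) ≤ 1/2)
        (by norm_num : (1:ℝ)/2 < 1)
      exact this.comp (tendsto_add_atTop_nat 1)
    have h2 : ContinuousAt (fun x : ℝ => M ^ x) 0 :=
      Real.continuousAt_const_rpow hM_pos.ne'
    have h3 := h2.tendsto.comp h1
    rw [Real.rpow_zero] at h3
    exact h3
  have hprod : Tendsto (fun k : ℕ => (ℓ : ℝ) * M ^ (myExp (k+1))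
      * (τ (cfc (fun t : ℝ => t ^ ((1:ℝ) / ((2^(k+1) : ℕ) : ℝ))) a)).re)
      atTop (nhds ((ℓ : ℝ) * 1 * d)) :=
    (tendsto_const_nhds.mul hMe).mul hsub
  have hfin : (1:ℝ) ≤ (ℓ : ℝ) * 1 * d := ge_of_tendsto' hprod key
  have hℓR : (0:ℝ) < (ℓ : ℝ) := by exact_mod_cast hℓ
  rw [div_le_iff₀ hℓR]
  nlinarith [hfin]
end

section
/- Let A be a unital C*-algebra, e₁, …, e_k pairwise orthogonal positive contractions in A, and a tracial state τ on A such that α^m fixes τ for an automorphism α with ‖α(eᵢ) − e_{i+1}‖ < δ for all 1 ≤ i ≤ k−1. Then for all i with 1 ≤ i ≤ k − m: d_τ((eᵢ − mδ)₊) ≤ d_τ(e_{i+m}). -/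
open Filter
open scoped ComplexOrder

set_option linter.unusedSectionVars false
set_option linter.unusedVariables false

section helpers
variable {A : Type*} [CStarAlgebra A] [PartialOrder A] [StarOrderedRing A]

lemma tau_mono_re (τ : A →ₗ[ℂ] ℂ) (hτpos : ∀ x : A, 0 ≤ x → 0 ≤ τ x)
    {u v : A} (h : u ≤ v) : (τ u).re ≤ (τ v).re := by
  have h0 := hτpos _ (sub_nonneg.mpr h)
  rw [map_sub] at h0
  have := (Complex.le_def.mp h0).1
  simp only [Complex.zero_re, Complex.sub_re] at this
  linarith

lemma isUnit_add_smul_one (η : ℝ) (hη : 0 < η) (Z : A) (hZ : 0 ≤ Z) : IsUnit (Z + η • 1) := by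
  have h1 : IsUnit ((algebraMap ℝ A) η) := (isUnit_iff_ne_zero.mpr hη.ne').map (algebraMap ℝ A)
  refine (fun h0 hle => CStarAlgebra.isUnit_of_le _ hle ⟨h0, h1⟩) ?_ ?_
  · rw [Algebra.algebraMap_eq_smul_one]; exact smul_nonneg hη.le zero_le_one
  · rw [Algebra.algebraMap_eq_smul_one]; exact le_add_of_nonneg_left hZ

lemma smul_one_le_smul_one {r s : ℝ} (h : r ≤ s) : (r • 1 : A) ≤ s • 1 := by
  rw [← sub_nonneg, ← sub_smul]
  exact smul_nonneg (by linarith) zero_le_one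

lemma re_smul_add (c d : ℝ) (z : ℂ) : (c • z + d • (1:ℂ)).re = c * z.re + d := by
  simp [Complex.real_smul, Complex.add_re, Complex.mul_re]

lemma re_sub_smul (d : ℝ) (z : ℂ) : (z - d • (1:ℂ)).re = z.re - d := by
  simp [Complex.real_smul, Complex.sub_re, Complex.mul_re]

lemma smul_le_smul_of_le {r : ℝ} (hr : 0 ≤ r) {x y : A} (h : x ≤ y) : r • x ≤ r • y := by
  rw [← sub_nonneg, ← smul_sub]
  exact smul_nonneg hr (sub_nonneg.mpr h)

end helpers

section trace
variable {A : Type*} [CStarAlgebra A] [PartialOrder A] [StarOrderedRing A]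

lemma trace_resolvent_eq (τ : A →ₗ[ℂ] ℂ) (hτtr : ∀ x y : A, τ (x * y) = τ (y * x))
    (w : A) (η : ℝ) (hη : 0 < η)
    (hZu : IsUnit (star w * w + η • 1)) (hYu : IsUnit (w * star w + η • 1)) :
    τ ((hZu.unit⁻¹ : Aˣ) : A) = τ ((hYu.unit⁻¹ : Aˣ) : A) := by
  have comm1 : w * ((hZu.unit : Aˣ) : A) = ((hYu.unit : Aˣ) : A) * w := by
    rw [hZu.unit_spec, hYu.unit_spec]
    simp only [mul_add, add_mul, mul_smul_comm, smul_mul_assoc, mul_one, one_mul, mul_assoc]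
  have inv1 : w * ((hZu.unit⁻¹ : Aˣ) : A) = ((hYu.unit⁻¹ : Aˣ) : A) * w := by
    calc w * ((hZu.unit⁻¹ : Aˣ) : A)
        = ((hYu.unit⁻¹ : Aˣ) : A) * (((hYu.unit : Aˣ) : A) * (w * ((hZu.unit⁻¹ : Aˣ) : A))) := by
          rw [Units.inv_mul_cancel_left]
      _ = ((hYu.unit⁻¹ : Aˣ) : A) * ((w * ((hZu.unit : Aˣ) : A)) * ((hZu.unit⁻¹ : Aˣ) : A)) := by
          rw [comm1]; simp only [mul_assoc]
      _ = ((hYu.unit⁻¹ : Aˣ) : A) * w := by rw [Units.mul_inv_cancel_right]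
  have commY : Commute (w * star w) ((hYu.unit : Aˣ) : A) := by
    rw [hYu.unit_spec]
    exact (Commute.refl _).add_right ((Commute.one_right _).smul_right η)
  have hmain : τ (star w * w * ((hZu.unit⁻¹ : Aˣ) : A))
      = τ (w * star w * ((hYu.unit⁻¹ : Aˣ) : A)) := by
    calc τ (star w * w * ((hZu.unit⁻¹ : Aˣ) : A))
        = τ (star w * (((hYu.unit⁻¹ : Aˣ) : A) * w)) := by rw [mul_assoc, inv1]
      _ = τ ((((hYu.unit⁻¹ : Aˣ) : A) * w) * star w) := hτtr _ _
      _ = τ (w * star w * ((hYu.unit⁻¹ : Aˣ) : A)) := by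
          rw [mul_assoc, ← (commY.units_inv_right).eq]
  have expand : ∀ (x : A) (hu : IsUnit (x + η • 1)),
      x * ((hu.unit⁻¹ : Aˣ) : A) + η • ((hu.unit⁻¹ : Aˣ) : A) = 1 := by
    intro x hu
    have h2 := hu.unit.mul_inv
    rw [hu.unit_spec] at h2
    calc x * ((hu.unit⁻¹ : Aˣ) : A) + η • ((hu.unit⁻¹ : Aˣ) : A)
        = (x + η • 1) * ((hu.unit⁻¹ : Aˣ) : A) := by rw [add_mul, smul_mul_assoc, one_mul]
      _ = 1 := h2
  have t1 := congrArg τ (expand (star w * w) hZu)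
  have t2 := congrArg τ (expand (w * star w) hYu)
  rw [map_add, τ.map_smul_of_tower] at t1 t2
  rw [hmain] at t1
  have h3 : η • τ ((hZu.unit⁻¹ : Aˣ) : A) = η • τ ((hYu.unit⁻¹ : Aˣ) : A) :=
    add_left_cancel (t1.trans t2.symm)
  exact smul_right_injective ℂ hη.ne' h3

end trace

section core
variable {A : Type*} [CStarAlgebra A] [PartialOrder A] [StarOrderedRing A]

set_option maxHeartbeats 2000000 in
lemma core_estimate (τ : A →ₗ[ℂ] ℂ) (hτpos : ∀ x : A, 0 ≤ x → 0 ≤ τ x) (hτ1 : τ 1 = 1)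
    (hτtr : ∀ x y : A, τ (x * y) = τ (y * x))
    (p b : A) (hp : 0 ≤ p) (hb : 0 ≤ b) (hpn : ‖p‖ ≤ 1)
    (ε ε' : ℝ) (hε'0 : 0 ≤ ε') (hεb : ‖p - b‖ ≤ ε') (hee : ε' < ε)
    (ψ : ℝ → ℝ) (hψc : Continuous ψ) (hψ0 : ∀ t, 0 ≤ ψ t) (hψ1 : ∀ t, t ≤ 1 → ψ t ≤ 1)
    (hψε : ∀ t, t ≤ ε → ψ t = 0) (d₂ : ℝ)
    (hd₂ : Filter.Tendsto (fun N : ℕ => (τ (cfc (fun t : ℝ => t ^ ((1:ℝ) / N)) b)).re)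
      Filter.atTop (nhds d₂)) :
    (τ (cfc ψ p)).re ≤ d₂ := by
  haveI : Nontrivial A := nontrivial_of_ne 1 0 fun h => by
    rw [h, map_zero] at hτ1; exact one_ne_zero hτ1.symm
  have hpsa : IsSelfAdjoint p := .of_nonneg hp
  have hbsa : IsSelfAdjoint b := .of_nonneg hb
  set δ₀ : ℝ := ε - ε' with hδ₀def
  have hδ₀ : 0 < δ₀ := by simp [hδ₀def]; linarith
  set lam : ℝ := δ₀⁻¹ with hlamdef
  have hlam : 0 < lam := inv_pos.mpr hδ₀
  have hspec : ∀ t ∈ spectrum ℝ p, 0 ≤ t ∧ t ≤ 1 := fun t ht =>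
    ⟨spectrum_nonneg_of_nonneg hp ht,
      (Real.le_norm_self t).trans ((spectrum.norm_le_norm_of_mem ht).trans hpn)⟩
  -- the function G
  set G : ℝ → ℝ := fun t => Real.sqrt (ψ t / max (t - ε') δ₀) with hGdef
  have hmaxpos : ∀ t : ℝ, 0 < max (t - ε') δ₀ := fun t => lt_of_lt_of_le hδ₀ (le_max_right _ _)
  have hGc : Continuous G := by
    apply Real.continuous_sqrt.comp
    exact hψc.div (by fun_prop) (fun t => (hmaxpos t).ne')
  have hGsq : ∀ t, G t * G t = ψ t / max (t - ε') δ₀ := fun t =>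
    Real.mul_self_sqrt (div_nonneg (hψ0 t) (hmaxpos t).le)
  have hGid : ∀ t : ℝ, G t * (t * G t) - ε' * (G t * G t) = ψ t := by
    intro t
    have h1 : G t * (t * G t) - ε' * (G t * G t) = (G t * G t) * (t - ε') := by ring
    rw [h1, hGsq]
    rcases eq_or_ne (ψ t) 0 with h | h
    · simp [h]
    · have ht : ε < t := by
        by_contra hc; exact h (hψε t (not_lt.mp hc))
      have hmax : max (t - ε') δ₀ = t - ε' := max_eq_left (by simp [hδ₀def]; linarith)
      rw [hmax, div_mul_cancel₀]
      linarith
  set X : A := cfc ψ p with hXdef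
  have hX0 : 0 ≤ X := cfc_nonneg (fun t _ => hψ0 t)
  set r : A := cfc G p with hrdef
  have hrsa : IsSelfAdjoint r := cfc_predicate G p
  -- X = r * (p * r) - ε' • (r * r)
  have hpr : cfc (fun t : ℝ => t * G t) p = p * r := by
    rw [cfc_mul (fun t : ℝ => t) G p continuous_id.continuousOn hGc.continuousOn, cfc_id' ℝ p]
  have hrpr : cfc (fun t : ℝ => G t * (t * G t)) p = r * (p * r) := by
    rw [cfc_mul G (fun t : ℝ => t * G t) p hGc.continuousOn (by fun_prop), hpr]
  have hGG : cfc (fun t : ℝ => G t * G t) p = r * r :=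
    cfc_mul G G p hGc.continuousOn hGc.continuousOn
  have hX1 : X = r * (p * r) - ε' • (r * r) := by
    rw [hXdef, ← cfc_congr (fun t _ => hGid t)]
    rw [cfc_sub _ _ p (by fun_prop) (by fun_prop), cfc_const_mul _ _ p (by fun_prop),
      hrpr, hGG]
  -- p - ε'•1 ≤ b
  have step2 : p - ε' • 1 ≤ b := by
    have h1 : p - b ≤ ‖p - b‖ • 1 := by
      have := (hpsa.sub hbsa).le_algebraMap_norm_self
      rwa [Algebra.algebraMap_eq_smul_one] at this
    have h2 : p - b ≤ ε' • 1 := h1.trans (smul_one_le_smul_one hεb)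
    calc p - ε' • 1 = p - b + (b - ε' • 1) := by abel
      _ ≤ ε' • 1 + (b - ε' • 1) := add_le_add_left h2 _
      _ = b := by abel
  have hconj : r * (p - ε' • 1) * r = r * (p * r) - ε' • (r * r) := by
    rw [mul_sub, sub_mul, mul_smul_comm, smul_mul_assoc, mul_one, mul_assoc]
  have step3 : X ≤ r * b * r := by
    rw [hX1, ← hconj]
    exact hrsa.conjugate_le_conjugate step2
  -- sqrt of b and the element w
  set sb : A := CFC.sqrt b with hsbdef
  have hsbnn : 0 ≤ sb := CFC.sqrt_nonneg b
  have hsbsa : IsSelfAdjoint sb := .of_nonneg hsbnn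
  have hsbsq : sb * sb = b := CFC.sqrt_mul_sqrt_self b hb
  set w : A := sb * r with hwdef
  have hstarw : star w = r * sb := by rw [hwdef, star_mul, hrsa.star_eq, hsbsa.star_eq]
  have hZeq : star w * w = r * b * r := by
    rw [hstarw, hwdef, mul_assoc, ← mul_assoc sb sb r, hsbsq, ← mul_assoc]
  have hYeq : w * star w = sb * (r * r) * sb := by
    rw [hstarw, hwdef, mul_assoc, ← mul_assoc r r sb, ← mul_assoc]
  -- r * r ≤ lam • 1
  have step4 : r * r ≤ lam • 1 := by
    rw [← hGG]
    calc cfc (fun t : ℝ => G t * G t) p ≤ cfc (fun _ : ℝ => lam) p := by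
          refine cfc_mono ?_ (hGc.mul hGc).continuousOn continuousOn_const
          intro t ht
          rw [hGsq]
          calc ψ t / max (t - ε') δ₀ ≤ 1 / δ₀ :=
                div_le_div₀ zero_le_one (hψ1 t (hspec t ht).2) hδ₀ (le_max_right _ _)
            _ = lam := one_div δ₀
      _ = lam • 1 := by rw [cfc_const lam p, Algebra.algebraMap_eq_smul_one]
  have step5 : w * star w ≤ lam • b := by
    rw [hYeq]
    calc sb * (r * r) * sb ≤ sb * (lam • 1) * sb := hsbsa.conjugate_le_conjugate step4
      _ = lam • b := by rw [mul_smul_comm, smul_mul_assoc, mul_one, hsbsq]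
  -- main eta estimate
  have key : ∀ η : ℝ, 0 < η → ∀ t₀ : ℝ, 0 < t₀ → t₀ ≤ 1 →
      (τ X).re - η ≤ d₂ + lam * t₀ / η := by
    intro η hη t₀ ht₀ ht₀1
    have hXη : ∀ t ∈ spectrum ℝ p, ψ t + η ≠ 0 := fun t _ => by
      have := hψ0 t; positivity
    set uX : Aˣ := cfcUnits (fun t => ψ t + η) p hXη (by fun_prop) hpsa with huXdef
    have huXval : (uX : A) = X + η • 1 := by
      show cfc (fun t => ψ t + η) p = _
      rw [cfc_add_const η ψ p hψc.continuousOn hpsa, Algebra.algebraMap_eq_smul_one]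
    have huXinv : ((uX⁻¹ : Aˣ) : A) = cfc (fun t => (ψ t + η)⁻¹) p := rfl
    have hZnn : (0:A) ≤ star w * w := star_mul_self_nonneg w
    have hYnn : (0:A) ≤ w * star w := mul_star_self_nonneg w
    have hZu := isUnit_add_smul_one η hη _ hZnn
    have hYu := isUnit_add_smul_one η hη _ hYnn
    have hBη : ∀ t ∈ spectrum ℝ b, lam * t + η ≠ 0 := fun t ht => by
      have := spectrum_nonneg_of_nonneg hb ht
      positivity
    set uB : Aˣ := cfcUnits (fun t => lam * t + η) b hBη (by fun_prop) hbsa with huBdef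
    have huBval : (uB : A) = lam • b + η • 1 := by
      show cfc (fun t => lam * t + η) b = _
      rw [cfc_add_const η (fun t => lam * t) b (by fun_prop) hbsa,
        cfc_const_mul lam _ b (by fun_prop), cfc_id' ℝ b, Algebra.algebraMap_eq_smul_one]
    have huBinv : ((uB⁻¹ : Aˣ) : A) = cfc (fun t => (lam * t + η)⁻¹) b := rfl
    -- inverse comparisons
    have huXnn : (0:A) ≤ (uX : A) := by
      rw [huXval]; exact add_nonneg hX0 (smul_nonneg hη.le zero_le_one)
    have hXZ : (uX : A) ≤ ((hZu.unit : Aˣ) : A) := by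
      rw [huXval, hZu.unit_spec, hZeq]
      exact add_le_add_left step3 _
    have iZX : ((hZu.unit⁻¹ : Aˣ) : A) ≤ ((uX⁻¹ : Aˣ) : A) := CStarAlgebra.inv_le_inv huXnn hXZ
    have hYnn' : (0:A) ≤ ((hYu.unit : Aˣ) : A) := by
      rw [hYu.unit_spec]; exact add_nonneg hYnn (smul_nonneg hη.le zero_le_one)
    have hYB : ((hYu.unit : Aˣ) : A) ≤ (uB : A) := by
      rw [hYu.unit_spec, huBval]
      exact add_le_add_left step5 _
    have iBY : ((uB⁻¹ : Aˣ) : A) ≤ ((hYu.unit⁻¹ : Aˣ) : A) := CStarAlgebra.inv_le_inv hYnn' hYB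
    -- E1 : X - η•1 ≤ 1 - η • uX⁻¹
    have hcontinvX : ContinuousOn (fun t : ℝ => (ψ t + η)⁻¹) (spectrum ℝ p) :=
      (hψc.continuousOn.add continuousOn_const).inv₀ hXη
    have hE1 : X - η • 1 ≤ (1:A) - η • ((uX⁻¹ : Aˣ) : A) := by
      have h1 : X - η • 1 = cfc (fun t => ψ t - η) p := by
        rw [cfc_sub _ _ p hψc.continuousOn continuousOn_const, cfc_const η p,
          Algebra.algebraMap_eq_smul_one]
      have h2 : (1:A) - η • ((uX⁻¹ : Aˣ) : A) = cfc (fun t => 1 - η * (ψ t + η)⁻¹) p := by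
        rw [huXinv, cfc_sub (fun _ => (1:ℝ)) (fun t => η * (ψ t + η)⁻¹) p continuousOn_const (continuousOn_const.mul hcontinvX),
          cfc_const_mul η _ p hcontinvX, cfc_const 1 p, map_one]
      rw [h1, h2]
      apply cfc_mono ?_ (hψc.sub continuous_const).continuousOn
        (continuousOn_const.sub (continuousOn_const.mul hcontinvX))
      intro t ht
      have hv0 := hψ0 t
      have hv1 := hψ1 t (hspec t ht).2
      have hvη : 0 < ψ t + η := by positivity
      have h3 : η * (ψ t + η)⁻¹ ≤ 1 - ψ t + η := by
        rw [← div_eq_mul_inv, div_le_iff₀ hvη]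
        nlinarith
      show ψ t - η ≤ 1 - η * (ψ t + η)⁻¹
      linarith
    -- trace steps
    have hmono1 : (τ (X - η • 1)).re ≤ (τ ((1:A) - η • ((hZu.unit⁻¹ : Aˣ) : A))).re := by
      apply tau_mono_re τ hτpos
      refine hE1.trans ?_
      exact sub_le_sub_left (smul_le_smul_of_le hη.le iZX) 1
    have htr := trace_resolvent_eq τ hτtr w η hη hZu hYu
    have hmono2 : (τ ((1:A) - η • ((hZu.unit⁻¹ : Aˣ) : A))).re
        = (τ ((1:A) - η • ((hYu.unit⁻¹ : Aˣ) : A))).re := by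
      rw [map_sub, map_sub, τ.map_smul_of_tower, τ.map_smul_of_tower, htr]
    have hmono3 : (τ ((1:A) - η • ((hYu.unit⁻¹ : Aˣ) : A))).re
        ≤ (τ ((1:A) - η • ((uB⁻¹ : Aˣ) : A))).re := by
      apply tau_mono_re τ hτpos
      exact sub_le_sub_left (smul_le_smul_of_le hη.le iBY) 1
    -- express as cfc h b
    have hcontinvB : ContinuousOn (fun t : ℝ => (lam * t + η)⁻¹) (spectrum ℝ b) :=
      ((continuousOn_const.mul continuousOn_id).add continuousOn_const).inv₀ hBη
    have hE3 : (1:A) - η • ((uB⁻¹ : Aˣ) : A) = cfc (fun t => 1 - η * (lam * t + η)⁻¹) b := by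
      rw [huBinv, cfc_sub (fun _ => (1:ℝ)) (fun t => η * (lam * t + η)⁻¹) b continuousOn_const (continuousOn_const.mul hcontinvB),
        cfc_const_mul η _ b hcontinvB, cfc_const 1 b, map_one]
    -- N bound
    have hNbound : ∀ N : ℕ, 1 ≤ N →
        (τ (cfc (fun t => 1 - η * (lam * t + η)⁻¹) b)).re
          ≤ (t₀ ^ ((1:ℝ)/N))⁻¹ * (τ (cfc (fun t : ℝ => t ^ ((1:ℝ)/N)) b)).re + lam * t₀ / η := by
      intro N hN
      have hNpos : (0:ℝ) < (1:ℝ)/N := by positivity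
      have hrpowc : ContinuousOn (fun t : ℝ => t ^ ((1:ℝ)/N)) (spectrum ℝ b) := by
        intro t ht
        exact (ContinuousAt.rpow_const continuousAt_id (Or.inr hNpos.le)).continuousWithinAt
      have ht₀pow : (0:ℝ) < t₀ ^ ((1:ℝ)/N) := Real.rpow_pos_of_pos ht₀ _
      have hmono : cfc (fun t => 1 - η * (lam * t + η)⁻¹) b
          ≤ cfc (fun t : ℝ => (t₀ ^ ((1:ℝ)/N))⁻¹ * t ^ ((1:ℝ)/N) + lam * t₀ / η) b := by
        apply cfc_mono ?_ (continuousOn_const.sub (continuousOn_const.mul hcontinvB))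
          ((continuousOn_const.mul hrpowc).add continuousOn_const)
        intro t ht
        show 1 - η * (lam * t + η)⁻¹ ≤ (t₀ ^ ((1:ℝ)/N))⁻¹ * t ^ ((1:ℝ)/N) + lam * t₀ / η
        have ht0 := spectrum_nonneg_of_nonneg hb ht
        have hsη : 0 < lam * t + η := by positivity
        have htpow : (0:ℝ) ≤ t ^ ((1:ℝ)/N) := Real.rpow_nonneg ht0 _
        rcases le_or_gt t t₀ with hc | hc
        · have hs0 : (0:ℝ) ≤ (lam * t + η)⁻¹ := by positivity
          have hinv : (lam * t + η) * (lam * t + η)⁻¹ = 1 := mul_inv_cancel₀ hsη.ne'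
          have key1 : 1 - η * (lam * t + η)⁻¹ ≤ lam * t / η := by
            rw [le_div_iff₀ hη]
            nlinarith [hinv, mul_nonneg (mul_nonneg (mul_nonneg hlam.le ht0)
              (mul_nonneg hlam.le ht0)) hs0,
              mul_nonneg (mul_nonneg hlam.le ht0) (mul_nonneg hs0 hη.le)]
          have key1' : lam * t / η ≤ lam * t₀ / η := by gcongr
          have h8 : (0:ℝ) ≤ (t₀ ^ ((1:ℝ)/N))⁻¹ * t ^ ((1:ℝ)/N) :=
            mul_nonneg (inv_nonneg.mpr ht₀pow.le) htpow
          linarith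
        · have key2 : 1 - η * (lam * t + η)⁻¹ ≤ 1 := by
            have : (0:ℝ) ≤ η * (lam * t + η)⁻¹ := by positivity
            linarith
          have h1le : (1:ℝ) ≤ (t₀ ^ ((1:ℝ)/N))⁻¹ * t ^ ((1:ℝ)/N) := by
            calc (1:ℝ) = (t₀ ^ ((1:ℝ)/N))⁻¹ * t₀ ^ ((1:ℝ)/N) := (inv_mul_cancel₀ ht₀pow.ne').symm
              _ ≤ (t₀ ^ ((1:ℝ)/N))⁻¹ * t ^ ((1:ℝ)/N) := mul_le_mul_of_nonneg_left
                  (Real.rpow_le_rpow ht₀.le hc.le hNpos.le) (inv_nonneg.mpr ht₀pow.le)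
          have : (0:ℝ) ≤ lam * t₀ / η := by positivity
          linarith
      have hsplit : cfc (fun t : ℝ => (t₀ ^ ((1:ℝ)/N))⁻¹ * t ^ ((1:ℝ)/N) + lam * t₀ / η) b
          = (t₀ ^ ((1:ℝ)/N))⁻¹ • cfc (fun t : ℝ => t ^ ((1:ℝ)/N)) b + (lam * t₀ / η) • 1 := by
        rw [cfc_add_const (lam * t₀ / η) (fun t : ℝ => (t₀ ^ ((1:ℝ)/N))⁻¹ * t ^ ((1:ℝ)/N)) b (continuousOn_const.mul hrpowc) hbsa,
          cfc_const_mul _ _ b hrpowc, Algebra.algebraMap_eq_smul_one]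
      have h7 := tau_mono_re τ hτpos hmono
      rw [hsplit, map_add, τ.map_smul_of_tower, τ.map_smul_of_tower, hτ1] at h7
      refine h7.trans (le_of_eq (re_smul_add _ _ _))
    -- take the limit in N
    have htt : Filter.Tendsto (fun N : ℕ => (t₀ ^ ((1:ℝ)/N))⁻¹) Filter.atTop (nhds 1) := by
      have h2 : Filter.Tendsto (fun N : ℕ => t₀ ^ ((1:ℝ)/N)) Filter.atTop (nhds 1) := by
        have hc : ContinuousAt (fun y : ℝ => t₀ ^ y) 0 := Real.continuousAt_const_rpow ht₀.ne'
        have h3 := hc.tendsto.comp tendsto_one_div_atTop_nhds_zero_nat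
        simpa [Real.rpow_zero, Function.comp_def] using h3
      simpa using h2.inv₀ one_ne_zero
    have hlim : Filter.Tendsto
        (fun N : ℕ => (t₀ ^ ((1:ℝ)/N))⁻¹ * (τ (cfc (fun t : ℝ => t ^ ((1:ℝ)/N)) b)).re
          + lam * t₀ / η) Filter.atTop (nhds (1 * d₂ + lam * t₀ / η)) :=
      Filter.Tendsto.add_const _ (htt.mul hd₂)
    have hfinal : (τ (cfc (fun t => 1 - η * (lam * t + η)⁻¹) b)).re ≤ 1 * d₂ + lam * t₀ / η :=
      ge_of_tendsto hlim (Filter.eventually_atTop.mpr ⟨1, fun N hN => hNbound N hN⟩)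
    -- assemble
    have hXre : (τ (X - η • 1)).re = (τ X).re - η := by
      rw [map_sub, τ.map_smul_of_tower, hτ1]
      exact re_sub_smul _ _
    rw [hE3] at hmono3
    rw [hXre] at hmono1
    rw [one_mul] at hfinal
    linarith
  -- eliminate t₀ and η
  have hstep : ∀ η : ℝ, 0 < η → (τ X).re - η ≤ d₂ := by
    intro η hη
    refine le_of_forall_pos_le_add fun s hs => ?_
    set t₀ : ℝ := min 1 (s * η / lam) with ht₀def
    have ht₀pos : 0 < t₀ := lt_min one_pos (by positivity)
    have h1 := key η hη t₀ ht₀pos (min_le_left _ _)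
    have hle : lam * t₀ / η ≤ s := by
      rw [div_le_iff₀ hη]
      have h2 : t₀ ≤ s * η / lam := min_le_right _ _
      calc lam * t₀ ≤ lam * (s * η / lam) := by gcongr
        _ = s * η := by field_simp
    linarith
  refine le_of_forall_pos_le_add fun η hη => ?_
  linarith [hstep η hη]

end core

section transport
variable {A : Type*} [CStarAlgebra A] [PartialOrder A] [StarOrderedRing A]

lemma algEquiv_pow_star (α : A ≃ₐ[ℂ] A) (hstar : ∀ x : A, α (star x) = star (α x)) (l : ℕ) :
    ∀ x : A, (α ^ l) (star x) = star ((α ^ l) x) := by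
  induction l with
  | zero => intro x; simp
  | succ n ih =>
    intro x
    have h1 : ∀ y : A, (α ^ (n+1)) y = (α ^ n) (α y) := fun y => by rw [pow_succ]; rfl
    rw [h1, h1, hstar, ih]

/-- The power of an algebra automorphism commuting with star, as a star algebra equivalence. -/
noncomputable def powSAE (α : A ≃ₐ[ℂ] A) (hstar : ∀ x : A, α (star x) = star (α x)) (l : ℕ) :
    A ≃⋆ₐ[ℂ] A :=
  { (α ^ l).toRingEquiv with
    map_star' := algEquiv_pow_star α hstar l
    map_smul' := fun r x => map_smul (α ^ l) r x }

lemma powSAE_apply (α : A ≃ₐ[ℂ] A) (hstar : ∀ x : A, α (star x) = star (α x)) (l : ℕ) (x : A) :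
    powSAE α hstar l x = (α ^ l) x := rfl

lemma powSAE_norm (α : A ≃ₐ[ℂ] A) (hstar : ∀ x : A, α (star x) = star (α x)) (l : ℕ) (x : A) :
    ‖(α ^ l) x‖ = ‖x‖ :=
  NonUnitalStarAlgHom.norm_map (powSAE α hstar l) (EquivLike.injective _) x

lemma powSAE_selfAdjoint (α : A ≃ₐ[ℂ] A) (hstar : ∀ x : A, α (star x) = star (α x)) (l : ℕ)
    {x : A} (hx : IsSelfAdjoint x) : IsSelfAdjoint ((α ^ l) x) := by
  rw [IsSelfAdjoint, ← algEquiv_pow_star α hstar l, hx.star_eq]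

lemma powSAE_nonneg (α : A ≃ₐ[ℂ] A) (hstar : ∀ x : A, α (star x) = star (α x)) (l : ℕ)
    {x : A} (hx : 0 ≤ x) : 0 ≤ (α ^ l) x := by
  have hs : x = star (CFC.sqrt x) * CFC.sqrt x := by
    rw [(IsSelfAdjoint.of_nonneg (CFC.sqrt_nonneg x)).star_eq, CFC.sqrt_mul_sqrt_self x hx]
  rw [hs, map_mul, algEquiv_pow_star α hstar l]
  exact star_mul_self_nonneg _

lemma powSAE_cfc (α : A ≃ₐ[ℂ] A) (hstar : ∀ x : A, α (star x) = star (α x)) (l : ℕ)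
    (f : ℝ → ℝ) (x : A) (hf : ContinuousOn f (spectrum ℝ x)) (hx : IsSelfAdjoint x) :
    (α ^ l) (cfc f x) = cfc f ((α ^ l) x) := by
  have hsa : IsSelfAdjoint ((α ^ l) x) := powSAE_selfAdjoint α hstar l hx
  have hcont : Continuous (powSAE α hstar l) :=
    (NonUnitalStarAlgHom.isometry (powSAE α hstar l) (EquivLike.injective _)).continuous
  exact StarAlgHomClass.map_cfc (S := ℂ) (powSAE α hstar l) f x hf hcont hx hsa

end transport

section tele
variable {A : Type*} [CStarAlgebra A] [PartialOrder A] [StarOrderedRing A]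

lemma telescope (α : A ≃ₐ[ℂ] A) (hstar : ∀ x : A, α (star x) = star (α x))
    (k : ℕ) (e : Fin k → A) (δ : ℝ)
    (hclose : ∀ (i : Fin k) (h : (i : ℕ) + 1 < k), ‖α (e i) - e ⟨(i : ℕ) + 1, h⟩‖ < δ) :
    ∀ l : ℕ, 1 ≤ l → ∀ (j : Fin k) (h : (j : ℕ) + l < k),
      ‖(α ^ l) (e j) - e ⟨(j : ℕ) + l, h⟩‖ < l * δ := by
  intro l
  induction l with
  | zero => omega
  | succ l ih =>
    intro _ j h
    by_cases hl : l = 0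
    · subst hl
      have := hclose j (by omega)
      simpa [pow_one] using this
    · have hl1 : 1 ≤ l := Nat.one_le_iff_ne_zero.mpr hl
      have hδpos : 0 < δ := lt_of_le_of_lt (norm_nonneg _) (hclose j (by omega))
      have hj1 : (j : ℕ) + 1 < k := by omega
      have h' : ((⟨(j : ℕ) + 1, hj1⟩ : Fin k) : ℕ) + l < k := by simp; omega
      have hIH := ih hl1 ⟨(j : ℕ) + 1, hj1⟩ h'
      have hsucc : ∀ x : A, (α ^ (l + 1)) x = (α ^ l) (α x) := fun x => by rw [pow_succ]; rfl
      have hidx : (⟨(j : ℕ) + (l + 1), h⟩ : Fin k) = ⟨((⟨(j : ℕ) + 1, hj1⟩ : Fin k) : ℕ) + l, h'⟩ :=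
        Fin.ext (by simp; omega)
      calc ‖(α ^ (l + 1)) (e j) - e ⟨(j : ℕ) + (l + 1), h⟩‖
          = ‖((α ^ l) (α (e j)) - (α ^ l) (e ⟨(j : ℕ) + 1, hj1⟩))
              + ((α ^ l) (e ⟨(j : ℕ) + 1, hj1⟩) - e ⟨((⟨(j : ℕ) + 1, hj1⟩ : Fin k) : ℕ) + l, h'⟩)‖ := by
            rw [hsucc, hidx]; congr 1; abel
        _ ≤ ‖(α ^ l) (α (e j)) - (α ^ l) (e ⟨(j : ℕ) + 1, hj1⟩)‖
              + ‖(α ^ l) (e ⟨(j : ℕ) + 1, hj1⟩) - e ⟨((⟨(j : ℕ) + 1, hj1⟩ : Fin k) : ℕ) + l, h'⟩‖ :=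
            norm_add_le _ _
        _ < δ + l * δ := by
            apply add_lt_add_of_le_of_lt _ hIH
            rw [← map_sub, powSAE_norm α hstar l]
            exact (hclose j hj1).le
        _ = (l + 1 : ℕ) * δ := by push_cast; ring
end tele


/-- Let `e₁, …, e_k` be pairwise orthogonal positive contractions in a unital C*-algebra,
`τ` a tracial state fixed by `α^m`, where `α` is a (star-)automorphism with
`‖α(eᵢ) − e_{i+1}‖ < δ` for `1 ≤ i ≤ k−1`.  Then for all `i` with `i + m ≤ k`:
`d_τ((eᵢ − mδ)₊) ≤ d_τ(e_{i+m})`, where `d_τ(x) = lim_n τ(x^{1/n})` (the limit values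
being quantified via `Tendsto`). -/
theorem dimension_function_shift_estimate {A : Type*} [CStarAlgebra A]
    [PartialOrder A] [StarOrderedRing A]
    (τ : A →ₗ[ℂ] ℂ) (hτpos : ∀ x : A, 0 ≤ x → 0 ≤ τ x) (hτ1 : τ 1 = 1)
    (hτtr : ∀ x y : A, τ (x * y) = τ (y * x))
    (α : A ≃ₐ[ℂ] A) (hstar : ∀ x : A, α (star x) = star (α x)) (m : ℕ)
    (hfix : ∀ x : A, τ ((α ^ m) x) = τ x)
    (k : ℕ) (e : Fin k → A) (hpos : ∀ i, 0 ≤ e i) (hcontr : ∀ i, ‖e i‖ ≤ 1)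
    (horth : ∀ i j, i ≠ j → e i * e j = 0) (δ : ℝ) (hδ : 0 < δ)
    (hclose : ∀ (i : Fin k) (h : (i : ℕ) + 1 < k), ‖α (e i) - e ⟨(i : ℕ) + 1, h⟩‖ < δ)
    (i : Fin k) (him : (i : ℕ) + m < k) (d₁ d₂ : ℝ)
    (hd₁ : Tendsto (fun n : ℕ => (τ (cfc (fun t : ℝ => t ^ ((1:ℝ) / n))
        (cfc (fun t : ℝ => max (t - m * δ) 0) (e i)))).re) atTop (nhds d₁))
    (hd₂ : Tendsto (fun n : ℕ => (τ (cfc (fun t : ℝ => t ^ ((1:ℝ) / n))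
        (e ⟨(i : ℕ) + m, him⟩))).re) atTop (nhds d₂)) :
    d₁ ≤ d₂ := by
  have he_sa : IsSelfAdjoint (e i) := .of_nonneg (hpos i)
  rcases Nat.eq_zero_or_pos m with hm | hm
  · -- m = 0 : the two sequences coincide
    have hidx : (⟨(i : ℕ) + m, him⟩ : Fin k) = i := Fin.ext (by simp [hm])
    have hinner : cfc (fun t : ℝ => max (t - m * δ) 0) (e i) = e i := by
      have h1 : cfc (fun t : ℝ => max (t - m * δ) 0) (e i) = cfc (fun t : ℝ => t) (e i) := by
        apply cfc_congr
        intro t ht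
        have h2 := spectrum_nonneg_of_nonneg (hpos i) ht
        simp [hm, max_eq_left, h2]
      rw [h1, cfc_id' ℝ (e i)]
    rw [hinner] at hd₁
    rw [hidx] at hd₂
    exact le_of_eq (tendsto_nhds_unique hd₁ hd₂)
  · -- m ≥ 1
    have hb := hpos ⟨(i : ℕ) + m, him⟩
    have hεpos : (0:ℝ) < (m : ℝ) * δ := mul_pos (by exact_mod_cast hm) hδ
    have hclose' := telescope α hstar k e δ hclose m hm i him
    refine le_of_tendsto hd₁ (Filter.eventually_atTop.mpr ⟨1, fun n hn => ?_⟩)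
    have hn0 : ((1:ℝ)/n) ≠ 0 := by
      have : (0:ℝ) < (1:ℝ)/n := by positivity
      exact this.ne'
    set ψ : ℝ → ℝ := fun t => (max (t - (m : ℝ) * δ) 0) ^ ((1:ℝ)/n) with hψdef
    have hψc : Continuous ψ := by
      rw [continuous_iff_continuousAt]; intro x
      exact ContinuousAt.rpow_const (by fun_prop) (Or.inr (by positivity))
    have hgc : ContinuousOn (fun t : ℝ => max (t - (m : ℝ) * δ) 0) (spectrum ℝ (e i)) := by
      fun_prop
    have hcomp : cfc (fun t : ℝ => t ^ ((1:ℝ)/n))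
          (cfc (fun t : ℝ => max (t - (m : ℝ) * δ) 0) (e i)) = cfc ψ (e i) := by
      refine (cfc_comp' (fun s : ℝ => s ^ ((1:ℝ)/n)) (fun t : ℝ => max (t - (m : ℝ) * δ) 0)
        (e i) ?_ hgc he_sa).symm
      intro s _
      exact (ContinuousAt.rpow_const continuousAt_id (Or.inr (by positivity))).continuousWithinAt
    have htrans : τ (cfc ψ (e i)) = τ (cfc ψ ((α ^ m) (e i))) := by
      rw [← powSAE_cfc α hstar m ψ (e i) hψc.continuousOn he_sa, hfix (cfc ψ (e i))]
    rw [hcomp, htrans]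
    refine core_estimate τ hτpos hτ1 hτtr ((α ^ m) (e i)) _ (powSAE_nonneg α hstar m (hpos i)) hb
      (by rw [powSAE_norm α hstar m]; exact hcontr i) ((m : ℝ) * δ)
      (‖(α ^ m) (e i) - e ⟨(i : ℕ) + m, him⟩‖) (norm_nonneg _) le_rfl hclose' ψ hψc ?_ ?_ ?_ d₂ hd₂
    · intro t; exact Real.rpow_nonneg (le_max_right _ _) _
    · intro t ht
      exact Real.rpow_le_one (le_max_right _ _)
        (max_le (by linarith) zero_le_one) (by positivity)
    · intro t ht
      have h3 : max (t - (m : ℝ) * δ) 0 = 0 := max_eq_right (by linarith)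
      rw [hψdef]
      simpa [h3] using Real.zero_rpow hn0
end
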